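/- (One-step Bellman decrease) Let N ≥ 2 be an integer, x ∈ X₀, and let (u(0),…,u(N−1)) be a feasible sequence for the N-QP at x whose cost equals V_N(x), with associated trajectory x(0) = x, x(τ+1) = A x(τ) + B u(τ). Then V_N(x) − V_{N−1}(x(1)) ≥ λ_min(P)·‖x‖² ≥ (λ_min(P)/φ_N)·V_N(x). -/

import Mathlib

open Matrix Finset Filter Topology

/-- The smallest eigenvalue of a (symmetric) real matrix. -/
noncomputable def lamMin {n : ℕ} (R : Matrix (Fin n) (Fin n) ℝ) : ℝ :=
  if h : R.IsHermitian then ⨅ i, h.eigenvalues i else 0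

/-- The largest eigenvalue of a (symmetric) real matrix. -/
noncomputable def lamMax {n : ℕ} (R : Matrix (Fin n) (Fin n) ℝ) : ℝ :=
  if h : R.IsHermitian then ⨆ i, h.eigenvalues i else 0

/-- The quadratic form `xᵀ R x`. -/
noncomputable def qf {p : ℕ} (R : Matrix (Fin p) (Fin p) ℝ) (x : Fin p → ℝ) : ℝ :=
  x ⬝ᵥ R.mulVec x

/-- λ := 1 − λ_min(Q̄)/λ_max(P̄). -/
noncomputable def lamParam {n : ℕ} (Qb Pb : Matrix (Fin n) (Fin n) ℝ) : ℝ :=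
  1 - lamMin Qb / lamMax Pb

/-- φ_N := (λ_max(P̄)·λ_max(P + KᵀQK)/λ_min(P̄))·(1 − λ^{N+1})/(1 − λ). -/
noncomputable def phi {n m : ℕ} (Qb Pb P : Matrix (Fin n) (Fin n) ℝ)
    (Q : Matrix (Fin m) (Fin m) ℝ) (K : Matrix (Fin m) (Fin n) ℝ) (N : ℕ) : ℝ :=
  (lamMax Pb * lamMax (P + Kᵀ * Q * K) / lamMin Pb) *
    ((1 - lamParam Qb Pb ^ (N + 1)) / (1 - lamParam Qb Pb))

/-- φ_∞ := λ_max(P̄)·λ_max(P + KᵀQK)/(λ_min(P̄)·(1 − λ)). -/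
noncomputable def phiInf {n m : ℕ} (Qb Pb P : Matrix (Fin n) (Fin n) ℝ)
    (Q : Matrix (Fin m) (Fin m) ℝ) (K : Matrix (Fin m) (Fin n) ℝ) : ℝ :=
  lamMax Pb * lamMax (P + Kᵀ * Q * K) / (lamMin Pb * (1 - lamParam Qb Pb))

/-- ψ := λ_max(KᵀQK + ĀᵀPĀ)/λ_min(P). -/
noncomputable def psiC {n m : ℕ} (P Abar : Matrix (Fin n) (Fin n) ℝ)
    (Q : Matrix (Fin m) (Fin m) ℝ) (K : Matrix (Fin m) (Fin n) ℝ) : ℝ :=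
  lamMax (Kᵀ * Q * K + Abarᵀ * P * Abar) / lamMin P

/-- χ := 1 − λ_min(P)/φ_∞. -/
noncomputable def chiC {n m : ℕ} (Qb Pb P : Matrix (Fin n) (Fin n) ℝ)
    (Q : Matrix (Fin m) (Fin m) ℝ) (K : Matrix (Fin m) (Fin n) ℝ) : ℝ :=
  1 - lamMin P / phiInf Qb Pb P Q K

/-- α_N := (λ_max(KᵀQK + ĀᵀPĀ)/λ_min(P))·∏_{κ=0}^{N−1}(1 − λ_min(P)/φ_{κ+1}). -/
noncomputable def alphaC {n m : ℕ} (Qb Pb P Abar : Matrix (Fin n) (Fin n) ℝ)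
    (Q : Matrix (Fin m) (Fin m) ℝ) (K : Matrix (Fin m) (Fin n) ℝ) (N : ℕ) : ℝ :=
  psiC P Abar Q K * ∏ κ ∈ Finset.range N, (1 - lamMin P / phi Qb Pb P Q K (κ + 1))

/-- γ_{N,S} := (1 − λ_min(P)/φ_∞)·max{1 + α_{N−S−1}, (1 + α_{N−1})·∏_{ℓ=N−S}^{N−1}(1 + α_ℓ)}. -/
noncomputable def gammaNS {n m : ℕ} (Qb Pb P Abar : Matrix (Fin n) (Fin n) ℝ)
    (Q : Matrix (Fin m) (Fin m) ℝ) (K : Matrix (Fin m) (Fin n) ℝ) (N S : ℕ) : ℝ :=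
  (1 - lamMin P / phiInf Qb Pb P Q K) *
    max (1 + alphaC Qb Pb P Abar Q K (N - S - 1))
      ((1 + alphaC Qb Pb P Abar Q K (N - 1)) *
        ∏ ℓ ∈ Finset.Ico (N - S) N, (1 + alphaC Qb Pb P Abar Q K ℓ))

/-- The trajectory of `x(τ+1) = A x(τ) + B u(τ)` from `x0` under the control sequence `u`. -/
def traj {n m : ℕ} (A : Matrix (Fin n) (Fin n) ℝ) (B : Matrix (Fin n) (Fin m) ℝ)
    (x0 : Fin n → ℝ) (u : ℕ → Fin m → ℝ) : ℕ → Fin n → ℝ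
  | 0 => x0
  | τ + 1 => A *ᵥ traj A B x0 u τ + B *ᵥ u τ

/-- Feasibility of a control sequence `u(0),…,u(N−1)` for the `N`-QP at `x`. -/
def Feasible {n m : ℕ} (A : Matrix (Fin n) (Fin n) ℝ) (B : Matrix (Fin n) (Fin m) ℝ)
    (X0 : Set (Fin n → ℝ)) (U : Set (Fin m → ℝ)) (N : ℕ) (x : Fin n → ℝ)
    (u : ℕ → Fin m → ℝ) : Prop :=
  (∀ τ < N, u τ ∈ U) ∧ (∀ τ < N, traj A B x u (τ + 1) ∈ X0)

/-- The cost `Σ_{τ=0}^{N−1}(x(τ)ᵀPx(τ) + u(τ)ᵀQu(τ)) + x(N)ᵀPx(N)` of the `N`-QP. -/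
noncomputable def cost {n m : ℕ} (A : Matrix (Fin n) (Fin n) ℝ) (B : Matrix (Fin n) (Fin m) ℝ)
    (P : Matrix (Fin n) (Fin n) ℝ) (Q : Matrix (Fin m) (Fin m) ℝ) (N : ℕ)
    (x : Fin n → ℝ) (u : ℕ → Fin m → ℝ) : ℝ :=
  (∑ τ ∈ Finset.range N, (qf P (traj A B x u τ) + qf Q (u τ))) + qf P (traj A B x u N)

/-- `V_N(x)`: the optimal value of the `N`-QP at `x`. -/
noncomputable def Vopt {n m : ℕ} (A : Matrix (Fin n) (Fin n) ℝ) (B : Matrix (Fin n) (Fin m) ℝ)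
    (P : Matrix (Fin n) (Fin n) ℝ) (Q : Matrix (Fin m) (Fin m) ℝ)
    (X0 : Set (Fin n → ℝ)) (U : Set (Fin m → ℝ)) (N : ℕ) (x : Fin n → ℝ) : ℝ :=
  sInf (cost A B P Q N x '' {u | Feasible A B X0 U N x u})

lemma qf_nonneg {p : ℕ} {R : Matrix (Fin p) (Fin p) ℝ} (hR : R.PosSemidef) (x : Fin p → ℝ) :
    0 ≤ qf R x := by simpa [qf] using hR.dotProduct_mulVec_nonneg x

lemma qf_repr {p : ℕ} {R : Matrix (Fin p) (Fin p) ℝ} (hR : R.IsHermitian) (x : Fin p → ℝ) :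
    ∃ y : Fin p → ℝ, x ⬝ᵥ x = ∑ i, y i * y i ∧
      qf R x = ∑ i, hR.eigenvalues i * (y i * y i) := by
  set U : Matrix (Fin p) (Fin p) ℝ := (hR.eigenvectorUnitary : Matrix (Fin p) (Fin p) ℝ) with hU
  have hstar : star U = Uᵀ := by
    ext i j
    simp [Matrix.star_eq_conjTranspose, Matrix.conjTranspose]
  have hUU : U * Uᵀ = 1 := by
    have := (Matrix.mem_unitaryGroup_iff).mp hR.eigenvectorUnitary.2
    rwa [hstar] at this
  refine ⟨Uᵀ *ᵥ x, ?_, ?_⟩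
  · have : (Uᵀ *ᵥ x) ⬝ᵥ (Uᵀ *ᵥ x) = (U *ᵥ (Uᵀ *ᵥ x)) ⬝ᵥ x := by
      rw [Matrix.dotProduct_mulVec, ← Matrix.mulVec_transpose, Matrix.transpose_transpose]
    rw [show (∑ i, (Uᵀ *ᵥ x) i * (Uᵀ *ᵥ x) i) = (Uᵀ *ᵥ x) ⬝ᵥ (Uᵀ *ᵥ x) from rfl, this,
      Matrix.mulVec_mulVec, hUU, Matrix.one_mulVec, dotProduct_comm]
  · have hspec := hR.spectral_theorem
    rw [Unitary.conjStarAlgAut_apply, ← hU, hstar] at hspec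
    have hdiag : Matrix.diagonal (RCLike.ofReal ∘ hR.eigenvalues) = Matrix.diagonal hR.eigenvalues := by
      simp [Function.comp]
    rw [hdiag] at hspec
    calc qf R x = x ⬝ᵥ (U * Matrix.diagonal hR.eigenvalues * Uᵀ) *ᵥ x := by rw [qf, ← hspec]
    _ = (Uᵀ *ᵥ x) ⬝ᵥ (Matrix.diagonal hR.eigenvalues *ᵥ (Uᵀ *ᵥ x)) := by
        rw [← Matrix.mulVec_mulVec, ← Matrix.mulVec_mulVec, Matrix.dotProduct_mulVec,
          ← Matrix.mulVec_transpose]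
    _ = ∑ i, hR.eigenvalues i * ((Uᵀ *ᵥ x) i * (Uᵀ *ᵥ x) i) := by
        simp only [dotProduct, Matrix.mulVec_diagonal]
        exact Finset.sum_congr rfl fun i _ => by ring

lemma lamMin_mul_le_qf {p : ℕ} {R : Matrix (Fin p) (Fin p) ℝ} (hR : R.IsHermitian)
    (x : Fin p → ℝ) : lamMin R * (x ⬝ᵥ x) ≤ qf R x := by
  obtain ⟨y, h1, h2⟩ := qf_repr hR x
  rw [lamMin, dif_pos hR, h1, h2, Finset.mul_sum]
  exact Finset.sum_le_sum fun i _ =>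
    mul_le_mul_of_nonneg_right (ciInf_le (Set.finite_range _).bddBelow i) (mul_self_nonneg _)

lemma qf_le_lamMax_mul {p : ℕ} {R : Matrix (Fin p) (Fin p) ℝ} (hR : R.IsHermitian)
    (x : Fin p → ℝ) : qf R x ≤ lamMax R * (x ⬝ᵥ x) := by
  obtain ⟨y, h1, h2⟩ := qf_repr hR x
  rw [lamMax, dif_pos hR, h1, h2, Finset.mul_sum]
  exact Finset.sum_le_sum fun i _ =>
    mul_le_mul_of_nonneg_right (le_ciSup (Set.finite_range _).bddAbove i) (mul_self_nonneg _)

lemma lamMin_pos {p : ℕ} {R : Matrix (Fin p) (Fin p) ℝ} (hR : R.PosDef) (hp : p ≠ 0) :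
    0 < lamMin R := by
  haveI : Nonempty (Fin p) := ⟨⟨0, Nat.pos_of_ne_zero hp⟩⟩
  rw [lamMin, dif_pos hR.1]
  obtain ⟨i0, hi0⟩ := Finite.exists_min hR.1.eigenvalues
  exact lt_of_lt_of_le (hR.eigenvalues_pos i0) (le_ciInf hi0)

lemma qf_transform {p q : ℕ} (M : Matrix (Fin q) (Fin q) ℝ) (C : Matrix (Fin q) (Fin p) ℝ)
    (x : Fin p → ℝ) : qf (Cᵀ * M * C) x = qf M (C *ᵥ x) := by
  rw [qf, qf, ← Matrix.mulVec_mulVec, ← Matrix.mulVec_mulVec, Matrix.dotProduct_mulVec,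
    Matrix.vecMul_transpose]

lemma dotProduct_single_one_self' {p : ℕ} (hp : p ≠ 0) :
    (Pi.single (⟨0, Nat.pos_of_ne_zero hp⟩ : Fin p) (1:ℝ)) ⬝ᵥ
      (Pi.single (⟨0, Nat.pos_of_ne_zero hp⟩ : Fin p) (1:ℝ)) = 1 := by
  simp [dotProduct, Pi.single_apply]

lemma lamMax_pos {p : ℕ} {R : Matrix (Fin p) (Fin p) ℝ} (hR : R.PosDef) (hp : p ≠ 0) :
    0 < lamMax R := by
  set e : Fin p → ℝ := Pi.single (⟨0, Nat.pos_of_ne_zero hp⟩ : Fin p) (1:ℝ) with he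
  have hne : e ≠ 0 := by
    intro h
    have := congrFun h ⟨0, Nat.pos_of_ne_zero hp⟩
    simp [he, Pi.single_apply] at this
  have h1 : (0:ℝ) < qf R e := by simpa [qf] using hR.dotProduct_mulVec_pos hne
  have h2 := qf_le_lamMax_mul hR.1 e
  rw [dotProduct_single_one_self' hp, mul_one] at h2
  linarith

lemma ct_eq {p q : ℕ} (M : Matrix (Fin p) (Fin q) ℝ) : Mᴴ = Mᵀ := by
  ext i j; simp [Matrix.conjTranspose]

lemma qf_sub {p : ℕ} (M N : Matrix (Fin p) (Fin p) ℝ) (y : Fin p → ℝ) :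
    qf (M - N) y = qf M y - qf N y := by
  simp [qf, Matrix.sub_mulVec, dotProduct_sub]

lemma qf_add {p : ℕ} (M N : Matrix (Fin p) (Fin p) ℝ) (y : Fin p → ℝ) :
    qf (M + N) y = qf M y + qf N y := by
  simp [qf, Matrix.add_mulVec, dotProduct_add]


/-- One-step Bellman decrease: with `(u(0),…,u(N−1))` an optimal feasible
sequence for the `N`-QP at `x ∈ X₀` (`N ≥ 2`) and `x(1) = Ax + Bu(0)`,
`V_N(x) − V_{N−1}(x(1)) ≥ λ_min(P)·‖x‖² ≥ (λ_min(P)/φ_N)·V_N(x)`. -/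
theorem stmt7 {n m : ℕ}
    (A : Matrix (Fin n) (Fin n) ℝ) (B : Matrix (Fin n) (Fin m) ℝ)
    (K : Matrix (Fin m) (Fin n) ℝ) (Qb Pb : Matrix (Fin n) (Fin n) ℝ)
    (hQb : Qb.PosDef) (hPb : Pb.PosDef)
    (hLyap : (A + B * K)ᵀ * Pb * (A + B * K) - Pb = -Qb)
    (c : ℝ) (hc : 0 < c)
    (X0 : Set (Fin n → ℝ)) (hX0 : X0 = {x : Fin n → ℝ | qf Pb x ≤ c})
    (X : Set (Fin n → ℝ)) (U : Set (Fin m → ℝ))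
    (hX : Convex ℝ X) (hU : Convex ℝ U)
    (h0X : (0 : Fin n → ℝ) ∈ X) (h0U : (0 : Fin m → ℝ) ∈ U)
    (hX0X : X0 ⊆ X) (hKU : ∀ x ∈ X, K *ᵥ x ∈ U)
    (P : Matrix (Fin n) (Fin n) ℝ) (Q : Matrix (Fin m) (Fin m) ℝ)
    (hP : P.PosDef) (hQ : Q.PosDef)
    (N : ℕ) (hN : 2 ≤ N) (x : Fin n → ℝ) (hx : x ∈ X0)
    (u : ℕ → Fin m → ℝ) (hfeas : Feasible A B X0 U N x u)
    (hopt : cost A B P Q N x u = Vopt A B P Q X0 U N x) :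
    lamMin P * (x ⬝ᵥ x)
        ≤ Vopt A B P Q X0 U N x - Vopt A B P Q X0 U (N - 1) (A *ᵥ x + B *ᵥ u 0) ∧
      (lamMin P / phi Qb Pb P Q K N) * Vopt A B P Q X0 U N x ≤ lamMin P * (x ⬝ᵥ x) := by
  have hPs := hP.posSemidef
  have hQs := hQ.posSemidef
  have hPbs := hPb.posSemidef
  -- boundedness below of the cost sets
  have hcostnn : ∀ (M : ℕ) (x' : Fin n → ℝ) (u' : ℕ → Fin m → ℝ),
      0 ≤ cost A B P Q M x' u' := by
    intro M x' u'
    exact add_nonneg (Finset.sum_nonneg fun τ _ =>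
      add_nonneg (qf_nonneg hPs _) (qf_nonneg hQs _)) (qf_nonneg hPs _)
  have hbdd : ∀ (M : ℕ) (x' : Fin n → ℝ),
      BddBelow (cost A B P Q M x' '' {u' | Feasible A B X0 U M x' u'}) := by
    intro M x'
    refine ⟨0, ?_⟩
    rintro r ⟨u', -, rfl⟩
    exact hcostnn M x' u'
  constructor
  · -- Part 1
    set x1 : Fin n → ℝ := A *ᵥ x + B *ᵥ u 0 with hx1
    have htraj : ∀ τ, traj A B x1 (fun σ => u (σ + 1)) τ = traj A B x u (τ + 1) := by
      intro τ
      induction τ with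
      | zero => rfl
      | succ τ ih => simp only [traj, ih]
    have hfeas' : Feasible A B X0 U (N - 1) x1 (fun σ => u (σ + 1)) := by
      constructor
      · intro τ hτ
        exact hfeas.1 (τ + 1) (by omega)
      · intro τ hτ
        rw [htraj]
        exact hfeas.2 (τ + 1) (by omega)
    have hkey : cost A B P Q N x u
        = cost A B P Q (N - 1) x1 (fun σ => u (σ + 1)) + (qf P x + qf Q (u 0)) := by
      conv_lhs => rw [cost, show N = (N - 1) + 1 by omega]
      rw [Finset.sum_range_succ']
      rw [cost]
      simp only [htraj]
      have h0 : traj A B x u 0 = x := rfl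
      rw [h0]
      ring
    have hVle : Vopt A B P Q X0 U (N - 1) x1
        ≤ cost A B P Q (N - 1) x1 (fun σ => u (σ + 1)) :=
      csInf_le (hbdd _ _) ⟨_, hfeas', rfl⟩
    have hqx := lamMin_mul_le_qf hP.1 x
    have hqu := qf_nonneg hQs (u 0)
    have := hopt
    linarith [hkey, hVle, hopt.symm.le, hopt.le]
  · -- Part 2
    rcases Nat.eq_zero_or_pos n with h0 | hnpos
    · subst h0
      haveI : IsEmpty (Fin 0) := by infer_instance
      have hl : lamMin P = 0 := by
        rw [lamMin, dif_pos hP.1]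
        rw [iInf_of_isEmpty]
        exact Real.sInf_empty
      have hxx : x ⬝ᵥ x = 0 := by simp [dotProduct]
      simp [hl, hxx]
    · have hp : n ≠ 0 := Nat.pos_iff_ne_zero.mp hnpos
      set Abar : Matrix (Fin n) (Fin n) ℝ := A + B * K with hAbar
      set lam : ℝ := lamParam Qb Pb with hlamdef
      have hlminPb := lamMin_pos hPb hp
      have hlmaxPb := lamMax_pos hPb hp
      have hlminQb := lamMin_pos hQb hp
      have hlminP := lamMin_pos hP hp
      -- Hermitian of P + KᵀQK and positivity of its lamMax
      have hQt : Qᵀ = Q := by rw [← ct_eq]; exact hQ.1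
      have hKQ : (Kᵀ * Q * K).IsHermitian := by
        rw [Matrix.IsHermitian]
        simp [Matrix.conjTranspose_mul, ct_eq, hQt, Matrix.mul_assoc]
      have hPK : (P + Kᵀ * Q * K).IsHermitian := hP.1.add hKQ
      have hKQnn : ∀ y : Fin n → ℝ, 0 ≤ qf (Kᵀ * Q * K) y := by
        intro y
        rw [qf_transform]
        exact qf_nonneg hQs _
      have hlmaxPK : 0 < lamMax (P + Kᵀ * Q * K) := by
        set e : Fin n → ℝ := Pi.single (⟨0, hnpos⟩ : Fin n) (1 : ℝ) with he
        have hne : e ≠ 0 := by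
          intro h
          have := congrFun h ⟨0, hnpos⟩
          simp [he, Pi.single_apply] at this
        have h1 : (0 : ℝ) < qf P e := by simpa [qf] using hP.dotProduct_mulVec_pos hne
        have h2 := qf_le_lamMax_mul hPK e
        have h3 := hKQnn e
        rw [qf_add] at h2
        have h4 : e ⬝ᵥ e = 1 := dotProduct_single_one_self' hp
        rw [h4, mul_one] at h2
        linarith
      -- Lyapunov rearrangement
      have hQbEq : Qb = Pb - Abarᵀ * Pb * Abar := by
        rw [← neg_neg Qb, ← hLyap]
        abel
      have hqfQb : ∀ y : Fin n → ℝ, qf Qb y = qf Pb y - qf Pb (Abar *ᵥ y) := by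
        intro y
        rw [hQbEq, qf_sub, qf_transform]
      -- lam in [0, 1)
      have hle : lamMin Qb ≤ lamMax Pb := by
        set e : Fin n → ℝ := Pi.single (⟨0, hnpos⟩ : Fin n) (1 : ℝ) with he
        have h1 := lamMin_mul_le_qf hQb.1 e
        have h2 := qf_le_lamMax_mul hPb.1 e
        have h3 := hqfQb e
        have h4 := qf_nonneg hPbs (Abar *ᵥ e)
        have h5 : e ⬝ᵥ e = 1 := dotProduct_single_one_self' hp
        rw [h5, mul_one] at h1 h2
        linarith
      have hlam0 : 0 ≤ lam := by
        rw [hlamdef, lamParam, sub_nonneg, div_le_one hlmaxPb]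
        exact hle
      have hlam1 : lam < 1 := by
        rw [hlamdef, lamParam]
        have : 0 < lamMin Qb / lamMax Pb := div_pos hlminQb hlmaxPb
        linarith
      -- one-step decay
      have hdecay : ∀ y : Fin n → ℝ, qf Pb (Abar *ᵥ y) ≤ lam * qf Pb y := by
        intro y
        have h1 := lamMin_mul_le_qf hQb.1 y
        have h2 := qf_le_lamMax_mul hPb.1 y
        have h3 := hqfQb y
        have h4 : (lamMin Qb / lamMax Pb) * qf Pb y ≤ lamMin Qb * (y ⬝ᵥ y) := by
          calc (lamMin Qb / lamMax Pb) * qf Pb y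
              ≤ (lamMin Qb / lamMax Pb) * (lamMax Pb * (y ⬝ᵥ y)) :=
                mul_le_mul_of_nonneg_left h2 (by positivity)
            _ = lamMin Qb * (y ⬝ᵥ y) := by field_simp
        have hgoal : (lamMin Qb / lamMax Pb) * qf Pb y ≤ qf Qb y := le_trans h4 h1
        have hexp : lam * qf Pb y = qf Pb y - (lamMin Qb / lamMax Pb) * qf Pb y := by
          rw [hlamdef, lamParam]; ring
        linarith
      -- trajectory under feedback
      set uK : ℕ → Fin m → ℝ := fun τ => K *ᵥ ((Abar ^ τ) *ᵥ x) with huK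
      have htrajK : ∀ τ, traj A B x uK τ = (Abar ^ τ) *ᵥ x := by
        intro τ
        induction τ with
        | zero => simp [traj]
        | succ τ ih =>
          show A *ᵥ traj A B x uK τ + B *ᵥ uK τ = _
          rw [ih, huK, pow_succ']
          simp [← Matrix.mulVec_mulVec, hAbar, Matrix.add_mulVec]
      have hWpow : ∀ τ, qf Pb ((Abar ^ τ) *ᵥ x) ≤ lam ^ τ * qf Pb x := by
        intro τ
        induction τ with
        | zero => simp [Matrix.one_mulVec]
        | succ τ ih =>
          have h1 : qf Pb ((Abar ^ (τ + 1)) *ᵥ x) = qf Pb (Abar *ᵥ ((Abar ^ τ) *ᵥ x)) := by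
            rw [pow_succ', ← Matrix.mulVec_mulVec]
          rw [h1, pow_succ, mul_comm (lam ^ τ) lam, mul_assoc]
          exact le_trans (hdecay _) (mul_le_mul_of_nonneg_left ih hlam0)
      have hWx : qf Pb x ≤ c := by
        rw [hX0] at hx
        exact hx
      have hWnn : ∀ y : Fin n → ℝ, 0 ≤ qf Pb y := qf_nonneg hPbs
      have hX0inv : ∀ τ, ((Abar ^ τ) *ᵥ x) ∈ X0 := by
        intro τ
        rw [hX0]
        have h1 := hWpow τ
        have h2 : lam ^ τ ≤ 1 := pow_le_one₀ hlam0 hlam1.le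
        have h3 : lam ^ τ * qf Pb x ≤ qf Pb x := by
          nlinarith [hWnn x]
        exact le_trans h1 (le_trans h3 hWx)
      have hfeasK : Feasible A B X0 U N x uK := by
        constructor
        · intro τ _
          exact hKU _ (hX0X (hX0inv τ))
        · intro τ _
          rw [htrajK]
          exact hX0inv (τ + 1)
      -- per-step cost bound
      set coef : ℝ := lamMax Pb * lamMax (P + Kᵀ * Q * K) / lamMin Pb with hcoef
      have htermPK : ∀ τ, qf (P + Kᵀ * Q * K) ((Abar ^ τ) *ᵥ x)
          ≤ coef * lam ^ τ * (x ⬝ᵥ x) := by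
        intro τ
        set z : Fin n → ℝ := (Abar ^ τ) *ᵥ x with hz
        have h1 := qf_le_lamMax_mul hPK z
        have h2 := lamMin_mul_le_qf hPb.1 z
        have h3 := hWpow τ
        have h4 := qf_le_lamMax_mul hPb.1 x
        have h5 : z ⬝ᵥ z ≤ (lam ^ τ * (lamMax Pb * (x ⬝ᵥ x))) / lamMin Pb := by
          rw [le_div_iff₀ hlminPb]
          have h6 : lam ^ τ * qf Pb x ≤ lam ^ τ * (lamMax Pb * (x ⬝ᵥ x)) :=
            mul_le_mul_of_nonneg_left h4 (pow_nonneg hlam0 τ)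
          nlinarith
        have h7 : lamMax (P + Kᵀ * Q * K) * (z ⬝ᵥ z)
            ≤ lamMax (P + Kᵀ * Q * K) * ((lam ^ τ * (lamMax Pb * (x ⬝ᵥ x))) / lamMin Pb) :=
          mul_le_mul_of_nonneg_left h5 hlmaxPK.le
        have h8 : lamMax (P + Kᵀ * Q * K) * ((lam ^ τ * (lamMax Pb * (x ⬝ᵥ x))) / lamMin Pb)
            = coef * lam ^ τ * (x ⬝ᵥ x) := by
          rw [hcoef]
          field_simp
        linarith
      -- total cost bound
      set G : ℝ := ∑ τ ∈ Finset.range (N + 1), lam ^ τ with hG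
      have hcostK : cost A B P Q N x uK ≤ coef * G * (x ⬝ᵥ x) := by
        rw [cost]
        have hsum : ∀ τ, qf P (traj A B x uK τ) + qf Q (uK τ)
            ≤ coef * lam ^ τ * (x ⬝ᵥ x) := by
          intro τ
          have h1 : qf Q (uK τ) = qf (Kᵀ * Q * K) ((Abar ^ τ) *ᵥ x) := by
            rw [huK, qf_transform]
          have h2 : qf P (traj A B x uK τ) = qf P ((Abar ^ τ) *ᵥ x) := by rw [htrajK]
          rw [h1, h2, ← qf_add]
          exact htermPK τ
        have hterm : qf P (traj A B x uK N) ≤ coef * lam ^ N * (x ⬝ᵥ x) := by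
          have h1 : qf P (traj A B x uK N) ≤ qf (P + Kᵀ * Q * K) ((Abar ^ N) *ᵥ x) := by
            rw [htrajK, qf_add]
            linarith [hKQnn ((Abar ^ N) *ᵥ x)]
          exact le_trans h1 (htermPK N)
        have hsum2 : (∑ τ ∈ Finset.range N, (qf P (traj A B x uK τ) + qf Q (uK τ)))
            ≤ ∑ τ ∈ Finset.range N, coef * lam ^ τ * (x ⬝ᵥ x) :=
          Finset.sum_le_sum fun τ _ => hsum τ
        have hsplit : (∑ τ ∈ Finset.range N, coef * lam ^ τ * (x ⬝ᵥ x))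
            + coef * lam ^ N * (x ⬝ᵥ x) = coef * G * (x ⬝ᵥ x) := by
          have h9 : (∑ τ ∈ Finset.range N, coef * lam ^ τ * (x ⬝ᵥ x))
              = coef * (x ⬝ᵥ x) * ∑ τ ∈ Finset.range N, lam ^ τ := by
            rw [Finset.mul_sum]
            exact Finset.sum_congr rfl fun τ _ => by ring
          rw [h9, hG, Finset.sum_range_succ]
          ring
        linarith
      have hgeom : G = (1 - lam ^ (N + 1)) / (1 - lam) := by
        rw [hG, geom_sum_eq (by linarith : lam ≠ 1)]
        rw [div_eq_div_iff (by linarith) (by linarith)]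
        ring
      have hphi : phi Qb Pb P Q K N = coef * G := by
        rw [phi, hcoef, hgeom, hlamdef]
      have hphipos : 0 < phi Qb Pb P Q K N := by
        have hpow : lam ^ (N + 1) < 1 := pow_lt_one₀ hlam0 hlam1 (by omega)
        have hc0 : 0 < coef := by
          rw [hcoef]
          exact div_pos (mul_pos hlmaxPb hlmaxPK) hlminPb
        rw [hphi, hgeom]
        exact mul_pos hc0 (div_pos (by linarith) (by linarith))
      have hV : Vopt A B P Q X0 U N x ≤ phi Qb Pb P Q K N * (x ⬝ᵥ x) := by
        rw [hphi]
        exact le_trans (csInf_le (hbdd _ _) ⟨uK, hfeasK, rfl⟩) hcostK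
      have hfinal : (lamMin P / phi Qb Pb P Q K N) * Vopt A B P Q X0 U N x
          ≤ (lamMin P / phi Qb Pb P Q K N) * (phi Qb Pb P Q K N * (x ⬝ᵥ x)) :=
        mul_le_mul_of_nonneg_left hV (div_nonneg hlminP.le hphipos.le)
      have hcancel : (lamMin P / phi Qb Pb P Q K N) * (phi Qb Pb P Q K N * (x ⬝ᵥ x))
          = lamMin P * (x ⬝ᵥ x) := by
        field_simp
      linarith
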